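/- For a conditional expectation G : X → A with h = G(p), the following are equivalent: (i) G∘Φ = Φ∘G; (ii) φ(h) = 1 − h. -/

import Mathlib

open TensorProduct

/-- The linear map `A ⊗[R] B → X`, `a ⊗ b ↦ i a * j b`. -/
noncomputable def blendMul (R : Type*) {A B X : Type*} [CommRing R] [Ring A] [Ring B] [Ring X]
    [Algebra R A] [Algebra R B] [Algebra R X] (i : A →ₐ[R] X) (j : B →ₐ[R] X) :
    A ⊗[R] B →ₗ[R] X :=
  (LinearMap.mul' R X).comp (TensorProduct.map i.toLinearMap j.toLinearMap)

theorem stmt13 {R A X : Type*} [CommRing R] [Ring A] [Ring X] [Algebra R A] [Algebra R X]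
    (i : A →ₐ[R] X) (j : (R × R) →ₐ[R] X)
    (h1 : Function.Bijective (blendMul R i j)) (h2 : Function.Bijective (blendMul R j i))
    (p q : X) (hp : p = j (1, 0)) (hq : q = j (0, 1))
    (E F : A →ₗ[R] A)
    (hE : ∀ a : A, p * i a * p = i (E a) * p)
    (hF : ∀ a : A, q * i a * q = i (F a) * q)
    (G : X →ₗ[R] A)
    (hG1 : ∀ (a : A) (x : X), G (i a * x) = a * G x)
    (hG2 : ∀ (x : X) (a : A), G (x * i a) = G x * a)
    (hG3 : ∀ a : A, G (i a) = a)
    (Φ : X ≃ₐ[R] X) (hΦa : ∀ a : A, Φ (i a) = i (E a + F a - a))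
    (hΦp : Φ p = q) (hΦq : Φ q = p) :
    (∀ x : X, G (Φ x) = E (G x) + F (G x) - G x) ↔
      E (G p) + F (G p) - G p = 1 - G p := by
  set φL : A →ₗ[R] A := E + F - LinearMap.id with hφL
  have hφa : ∀ a : A, E a + F a - a = φL a := fun a => by simp [hφL]
  have hGone : G 1 = 1 := by
    have := hG3 1; rwa [map_one] at this
  have hpq : p + q = 1 := by
    rw [hp, hq, ← map_add]
    norm_num
    exact map_one j
  have hGq : G q = 1 - G p := by
    have h1' : G p + G q = 1 := by rw [← map_add, hpq, hGone]
    exact eq_sub_of_add_eq' h1'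
  have hinj : ∀ x y : A, i x = i y → x = y := fun x y hxy => by
    have := congrArg G hxy; simpa [hG3] using this
  have hφmul : ∀ a b : A, φL (a * b) = φL a * φL b := by
    intro a b
    apply hinj
    have ha := hΦa a
    have hb := hΦa b
    have hab := hΦa (a * b)
    rw [hφa] at ha hb hab
    calc i (φL (a * b)) = Φ (i (a * b)) := hab.symm
      _ = Φ (i a) * Φ (i b) := by rw [map_mul, map_mul]
      _ = i (φL a) * i (φL b) := by rw [ha, hb]
      _ = i (φL a * φL b) := (map_mul i _ _).symm
  constructor
  · intro H
    have := H p
    rw [hΦp, hGq] at this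
    exact this.symm
  · intro hkey x
    have hkey' : φL (G p) = 1 - G p := by rw [← hφa]; exact hkey
    have hφ1 : φL 1 = 1 := by
      apply hinj
      have h := hΦa 1
      rw [hφa] at h
      rw [map_one, map_one] at h
      rw [← h, map_one]
    have hφq : φL (G q) = G p := by
      rw [hGq, map_sub, hφ1, hkey', sub_sub_cancel]
    rw [hφa]
    suffices hmain : ∀ y : A ⊗[R] (R × R),
        G (Φ (blendMul R i j y)) = φL (G (blendMul R i j y)) by
      obtain ⟨y, hy⟩ := h1.2 x
      rw [← hy]; exact hmain y
    intro y
    induction y using TensorProduct.induction_on with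
    | zero => simp
    | add u v hu hv => simp only [map_add, hu, hv]
    | tmul a rs =>
      obtain ⟨r, s⟩ := rs
      have hj : j (r, s) = r • p + s • q := by
        have hrs : (r, s) = r • ((1 : R), (0 : R)) + s • ((0 : R), (1 : R)) := by
          simp [Prod.smul_mk]
        rw [hrs, map_add, map_smul, map_smul, ← hp, ← hq]
      have hb : blendMul R i j (a ⊗ₜ (r, s)) = i a * j (r, s) := by
        simp [blendMul]
      have hΦia := hΦa a
      rw [hφa] at hΦia
      have h1' : Φ (i a * (r • p + s • q)) = i (φL a) * (r • q + s • p) := by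
        rw [map_mul, hΦia, map_add, map_smul, map_smul, hΦp, hΦq]
      have hφq' : φL (1 - G p) = G p := by rw [← hGq]; exact hφq
      rw [hb, hj, h1', hG1, hG1, hφmul]
      simp only [map_add, map_smul, hGq, hφq', hkey']
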